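/- arXiv:2507.02422 — 5 statements merged into one kernel-verified Lean document; each statement's English description precedes it below -/
import Mathlib

section
/- Let Φ be a positive unital linear map from the n×n complex matrices to the m×m complex matrices, let x be a positive semidefinite n×n complex matrix, and let f : ℝ → ℝ be a continuous function that is convex on [0, ∞). Then Φ(x) is positive semidefinite and Tr f(Φ(x)) ≤ Tr Φ(f(x)). -/
open scoped ComplexOrder

open Matrix

namespace TJaux

variable {k : ℕ} {A : Matrix (Fin k) (Fin k) ℂ}

lemma sum_stdBasisMatrix_diag : ∑ i : Fin k, Matrix.single i i (1:ℂ) = 1 := by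
  ext a b
  rw [Matrix.sum_apply]
  by_cases h : a = b
  · subst h
    simp [Matrix.single, Matrix.one_apply]
  · rw [Matrix.one_apply_ne h, Finset.sum_eq_zero]
    intro x _
    simp only [Matrix.single, of_apply]
    rw [if_neg]
    rintro ⟨rfl, rfl⟩
    exact h rfl

lemma diagonal_eq_sum (d : Fin k → ℂ) :
    diagonal d = ∑ i : Fin k, d i • Matrix.single i i (1:ℂ) := by
  ext a b
  rw [Matrix.sum_apply]
  by_cases h : a = b
  · subst h
    simp [Matrix.single, diagonal_apply, Matrix.smul_apply]
  · rw [diagonal_apply_ne _ h, Finset.sum_eq_zero]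
    intro x _
    simp only [Matrix.single, Matrix.smul_apply, of_apply, smul_eq_mul]
    rw [if_neg, mul_zero]
    rintro ⟨rfl, rfl⟩
    exact h rfl

/-- projection onto `i`-th eigenvector. -/
noncomputable def eigProj (hA : A.IsHermitian) (i : Fin k) : Matrix (Fin k) (Fin k) ℂ :=
  (hA.eigenvectorUnitary : Matrix (Fin k) (Fin k) ℂ) * Matrix.single i i 1 *
    star (hA.eigenvectorUnitary : Matrix (Fin k) (Fin k) ℂ)

lemma eigProj_posSemidef (hA : A.IsHermitian) (i : Fin k) : (eigProj hA i).PosSemidef := by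
  have key : eigProj hA i =
      ((hA.eigenvectorUnitary : Matrix (Fin k) (Fin k) ℂ) * Matrix.single i i 1) *
      ((hA.eigenvectorUnitary : Matrix (Fin k) (Fin k) ℂ) * Matrix.single i i 1)ᴴ := by
    rw [conjTranspose_mul]
    have h1 : (Matrix.single i i (1:ℂ))ᴴ = Matrix.single i i 1 := by
      ext a b; simp [Matrix.single, conjTranspose_apply, and_comm]
    rw [h1, eigProj, star_eq_conjTranspose, mul_assoc, mul_assoc, ← mul_assoc (Matrix.single i i 1),
      single_mul_single_same, one_mul]
  rw [key]
  exact posSemidef_self_mul_conjTranspose _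

lemma cfc_eq_sum (hA : A.IsHermitian) (g : ℝ → ℝ) :
    hA.cfc g = ∑ i : Fin k, (g (hA.eigenvalues i) : ℂ) • eigProj hA i := by
  rw [Matrix.IsHermitian.cfc, Unitary.conjStarAlgAut_apply]
  have : (diagonal (RCLike.ofReal ∘ g ∘ hA.eigenvalues) : Matrix (Fin k) (Fin k) ℂ)
      = ∑ i : Fin k, (g (hA.eigenvalues i) : ℂ) • Matrix.single i i (1:ℂ) :=
    diagonal_eq_sum _
  rw [this, Matrix.mul_sum, Matrix.sum_mul]
  refine Finset.sum_congr rfl fun i _ => ?_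
  rw [Matrix.mul_smul, Matrix.smul_mul, eigProj]

lemma cfc_id (hA : A.IsHermitian) : hA.cfc id = A := by
  rw [Matrix.IsHermitian.cfc]
  exact hA.spectral_theorem.symm

lemma sum_eigProj (hA : A.IsHermitian) : ∑ i : Fin k, eigProj hA i = 1 := by
  have := cfc_eq_sum hA (fun _ => 1)
  simp only [Complex.ofReal_one, one_smul] at this
  rw [← this, Matrix.IsHermitian.cfc, Unitary.conjStarAlgAut_apply]
  rw [show (diagonal ((RCLike.ofReal : ℝ → ℂ) ∘ (fun _ => (1:ℝ)) ∘ hA.eigenvalues)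
      : Matrix (Fin k) (Fin k) ℂ) = 1 by
    rw [show ((RCLike.ofReal : ℝ → ℂ) ∘ (fun _ => (1:ℝ)) ∘ hA.eigenvalues)
        = fun _ => (1:ℂ) from rfl, diagonal_one], mul_one]
  exact (Matrix.mem_unitaryGroup_iff).mp hA.eigenvectorUnitary.2

lemma trace_cfc (hA : A.IsHermitian) (g : ℝ → ℝ) :
    (hA.cfc g).trace = ∑ i, (g (hA.eigenvalues i) : ℂ) := by
  rw [Matrix.IsHermitian.cfc, Unitary.conjStarAlgAut_apply, Matrix.trace_mul_cycle]
  rw [show star (hA.eigenvectorUnitary : Matrix (Fin k) (Fin k) ℂ) *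
      (hA.eigenvectorUnitary : Matrix (Fin k) (Fin k) ℂ) = 1 from
    Unitary.coe_star_mul_self _, one_mul, trace_diagonal]
  rfl

lemma posSemidef_diag_nonneg {M : Matrix (Fin k) (Fin k) ℂ} (hM : M.PosSemidef) (j : Fin k) :
    0 ≤ M j j := by
  exact hM.diag_nonneg

lemma sum_diag_conj (W : Matrix (Fin k) (Fin k) ℂ) (hW : W ∈ Matrix.unitaryGroup (Fin k) ℂ)
    (M : Matrix (Fin k) (Fin k) ℂ) :
    ∑ j, (star W * M * W) j j = M.trace := by
  have : (star W * M * W).trace = M.trace := by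
    rw [Matrix.trace_mul_cycle]
    rw [show W * star W = 1 from (Matrix.mem_unitaryGroup_iff).mp hW, one_mul]
  rw [← this]
  rfl

end TJaux


/-- `g` applied to a Hermitian matrix via the functional calculus
(`g(A) = ∑ᵢ g(λᵢ) Pᵢ` for the spectral decomposition `A = ∑ᵢ λᵢ Pᵢ`). -/
noncomputable def matFun {k : ℕ} {A : Matrix (Fin k) (Fin k) ℂ} (hA : A.IsHermitian)
    (g : ℝ → ℝ) : Matrix (Fin k) (Fin k) ℂ := hA.cfc g

/-- **Trace Jensen inequality for positive unital maps (Petz).**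
If `Φ` is a positive unital linear map from `n×n` to `m×m` complex matrices, `x` is positive
semidefinite and `f : ℝ → ℝ` is continuous and convex on `[0, ∞)`, then `Φ(x)` is positive
semidefinite and `Tr f(Φ(x)) ≤ Tr Φ(f(x))`. -/
theorem trace_jensen_unital_positive_map_of_posSemidef {n m : ℕ}
    (Φ : Matrix (Fin n) (Fin n) ℂ →ₗ[ℂ] Matrix (Fin m) (Fin m) ℂ)
    (hΦpos : ∀ y : Matrix (Fin n) (Fin n) ℂ, y.PosSemidef → (Φ y).PosSemidef)
    (hΦ1 : Φ 1 = 1)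
    {x : Matrix (Fin n) (Fin n) ℂ} (hx : x.PosSemidef)
    (f : ℝ → ℝ) (hf : Continuous f) (hconv : ConvexOn ℝ (Set.Ici (0 : ℝ)) f) :
    ∃ hΦx : (Φ x).PosSemidef,
      (matFun hΦx.isHermitian f).trace ≤ (Φ (matFun hx.isHermitian f)).trace := by
  classical
  have hΦx : (Φ x).PosSemidef := hΦpos x hx
  refine ⟨hΦx, ?_⟩
  set lam := hx.isHermitian.eigenvalues with hlam
  set mu := hΦx.isHermitian.eigenvalues with hmu
  set W : Matrix (Fin m) (Fin m) ℂ := (hΦx.isHermitian.eigenvectorUnitary :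
    Matrix (Fin m) (Fin m) ℂ) with hW
  set E : Fin n → Matrix (Fin n) (Fin n) ℂ := TJaux.eigProj hx.isHermitian with hE
  have hlam_nonneg : ∀ i, 0 ≤ lam i := fun i => hx.eigenvalues_nonneg i
  have hEpsd : ∀ i, (Φ (E i)).PosSemidef := fun i => hΦpos _ (TJaux.eigProj_posSemidef _ i)
  have hconjpsd : ∀ i, (star W * Φ (E i) * W).PosSemidef := fun i => by
    simpa [Matrix.star_eq_conjTranspose] using (hEpsd i).conjTranspose_mul_mul_same W
  set c : Fin m → Fin n → ℝ := fun j i => ((star W * Φ (E i) * W) j j).re with hc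
  have hc_nonneg : ∀ j i, 0 ≤ c j i := fun j i =>
    (Complex.nonneg_iff.mp (TJaux.posSemidef_diag_nonneg (hconjpsd i) j)).1
  have hc_eq : ∀ j i, ((star W * Φ (E i) * W) j j) = (c j i : ℂ) := fun j i => by
    have h := Complex.nonneg_iff.mp (TJaux.posSemidef_diag_nonneg (hconjpsd i) j)
    exact Complex.ext (by simp [hc]) (by simpa using h.2.symm)
  -- ∑ i, c j i = 1
  have hsumE : ∑ i, E i = 1 := TJaux.sum_eigProj hx.isHermitian
  have hc_sum : ∀ j, ∑ i, c j i = 1 := by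
    intro j
    have h1 : ∑ i, (star W * Φ (E i) * W) j j = 1 := by
      have : ∑ i, star W * Φ (E i) * W = star W * Φ (∑ i, E i) * W := by
        rw [map_sum, Matrix.mul_sum, Matrix.sum_mul]
      rw [← Matrix.sum_apply]
      rw [this, hsumE, hΦ1, mul_one,
        show star W * W = 1 from Unitary.coe_star_mul_self _, Matrix.one_apply_eq]
    have : ((∑ i, c j i : ℝ) : ℂ) = 1 := by
      rw [Complex.ofReal_sum, ← h1]
      exact Finset.sum_congr rfl fun i _ => (hc_eq j i).symm
    exact_mod_cast this
  -- x as a sum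
  have hx_sum : x = ∑ i, (lam i : ℂ) • E i := by
    have := TJaux.cfc_eq_sum hx.isHermitian id
    rw [TJaux.cfc_id] at this
    exact this
  -- mu j = ∑ i, c j i * lam i
  have hmu_eq : ∀ j, mu j = ∑ i, c j i • lam i := by
    intro j
    have hdiag : star W * Φ x * W = diagonal (RCLike.ofReal ∘ mu) :=
      by have h := hΦx.isHermitian.conjStarAlgAut_star_eigenvectorUnitary
         rwa [Unitary.conjStarAlgAut_star_apply] at h
    have h1 : (mu j : ℂ) = ∑ i, (lam i : ℂ) * (c j i : ℂ) := by
      have h2 : star W * Φ x * W = ∑ i, (lam i : ℂ) • (star W * Φ (E i) * W) := by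
        rw [hx_sum, map_sum]
        simp only [_root_.map_smul]
        rw [Matrix.mul_sum, Matrix.sum_mul]
        refine Finset.sum_congr rfl fun i _ => ?_
        rw [Matrix.mul_smul, Matrix.smul_mul]
      have h3 := congrArg (fun M => M j j) (hdiag.symm.trans h2)
      simp only [diagonal_apply_eq, Function.comp_apply] at h3
      rw [Matrix.sum_apply] at h3
      rw [show ((RCLike.ofReal (mu j) : ℂ)) = (mu j : ℂ) from rfl] at h3
      rw [h3]
      refine Finset.sum_congr rfl fun i _ => ?_
      rw [Matrix.smul_apply, hc_eq j i, smul_eq_mul]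
    have : ((mu j : ℝ) : ℂ) = ((∑ i, c j i • lam i : ℝ) : ℂ) := by
      rw [h1, Complex.ofReal_sum]
      exact Finset.sum_congr rfl fun i _ => by
        rw [smul_eq_mul, Complex.ofReal_mul, mul_comm]
    exact_mod_cast this
  -- Jensen
  have hjensen : ∀ j, f (mu j) ≤ ∑ i, c j i * f (lam i) := by
    intro j
    rw [hmu_eq j]
    exact hconv.map_sum_le (fun i _ => hc_nonneg j i) (hc_sum j)
      (fun i _ => hlam_nonneg i)
  -- traces
  have hLHS : (matFun hΦx.isHermitian f).trace = ((∑ j, f (mu j) : ℝ) : ℂ) := by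
    rw [matFun, TJaux.trace_cfc, Complex.ofReal_sum]
  have htraceE : ∀ i, (Φ (E i)).trace = ((∑ j, c j i : ℝ) : ℂ) := by
    intro i
    rw [← TJaux.sum_diag_conj W hΦx.isHermitian.eigenvectorUnitary.2 (Φ (E i)),
      Complex.ofReal_sum]
    exact Finset.sum_congr rfl fun j _ => hc_eq j i
  have hRHS : (Φ (matFun hx.isHermitian f)).trace
      = ((∑ i, f (lam i) * ∑ j, c j i : ℝ) : ℂ) := by
    rw [matFun, TJaux.cfc_eq_sum hx.isHermitian f, map_sum, Matrix.trace_sum,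
      Complex.ofReal_sum]
    refine Finset.sum_congr rfl fun i _ => ?_
    rw [_root_.map_smul, Matrix.trace_smul, htraceE i, smul_eq_mul, Complex.ofReal_mul]
  rw [hLHS, hRHS]
  rw [Complex.real_le_real]
  calc ∑ j, f (mu j) ≤ ∑ j, ∑ i, c j i * f (lam i) :=
        Finset.sum_le_sum fun j _ => hjensen j
    _ = ∑ i, f (lam i) * ∑ j, c j i := by
        rw [Finset.sum_comm]
        exact Finset.sum_congr rfl fun i _ => by
          rw [Finset.mul_sum]
          exact Finset.sum_congr rfl fun j _ => mul_comm _ _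
end

section
/- Let Φ be a positive linear map from the n×n complex matrices to the m×m complex matrices with Φ(1) ≤ 1 (a contractive positive map), let x be a positive semidefinite n×n complex matrix, and let f : ℝ → ℝ be a continuous function that is convex on [0, ∞) with f(0) = 0. Then Φ(x) is positive semidefinite and Tr f(Φ(x)) ≤ Tr Φ(f(x)). -/
open scoped ComplexOrder
open Matrix Finset

/-- sub-probability Jensen -/
lemma jensen_sub {k : ℕ} (f : ℝ → ℝ) (hconv : ConvexOn ℝ (Set.Ici (0:ℝ)) f) (hf0 : f 0 = 0)
    (w z : Fin k → ℝ) (hw : ∀ i, 0 ≤ w i) (hz : ∀ i, 0 ≤ z i) (hw1 : ∑ i, w i ≤ 1) :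
    f (∑ i, w i * z i) ≤ ∑ i, w i * f (z i) := by
  set w' : Option (Fin k) → ℝ := fun o => o.elim (1 - ∑ i, w i) w with hw'
  set z' : Option (Fin k) → ℝ := fun o => o.elim 0 z with hz'
  have h0 : ∀ o ∈ Finset.univ (α := Option (Fin k)), 0 ≤ w' o := by
    rintro (_ | i) _
    · simpa [w'] using hw1
    · exact hw i
  have h1 : ∑ o : Option (Fin k), w' o = 1 := by
    simp [w', Fintype.sum_option]
  have hmem : ∀ o ∈ Finset.univ (α := Option (Fin k)), z' o ∈ Set.Ici (0:ℝ) := by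
    rintro (_ | i) _
    · simp [z']
    · exact hz i
  have := hconv.map_sum_le h0 h1 hmem
  simpa [w', z', Fintype.sum_option, hf0, smul_eq_mul] using this

lemma unitary_diag_sum {k : ℕ} (U : Matrix (Fin k) (Fin k) ℂ) (d : Fin k → ℂ) :
    U * Matrix.diagonal d * Uᴴ
      = ∑ i, d i • Matrix.vecMulVec (fun a => U a i) (fun b => star (U b i)) := by
  ext a b
  simp only [Matrix.mul_apply, Matrix.diagonal_apply, Matrix.conjTranspose_apply,
    Matrix.sum_apply, Matrix.smul_apply, Matrix.vecMulVec_apply, smul_eq_mul,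
    Finset.sum_mul, Finset.mul_sum]
  rw [Finset.sum_comm]
  congr 1 with c
  rw [Finset.sum_eq_single c (by intro e _ h; simp [h, Ne.symm h]) (by simp)]
  simp; ring

lemma psd_vecMulVec {k : ℕ} (v : Fin k → ℂ) :
    (Matrix.vecMulVec v (star v)).PosSemidef := by
  rw [Matrix.posSemidef_iff_dotProduct_mulVec]
  constructor
  · ext a b
    simp [Matrix.vecMulVec_apply, mul_comm]
  · intro y
    have : dotProduct (star y) ((Matrix.vecMulVec v (star v)) *ᵥ y)
        = star (dotProduct (star v) y) * (dotProduct (star v) y) := by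
      simp only [dotProduct, Matrix.mulVec, Matrix.vecMulVec_apply, star_sum, star_mul',
        Pi.star_apply, star_star, Finset.mul_sum, Finset.sum_mul, dotProduct]
      rw [Finset.sum_comm]
      congr 1 with a
      congr 1 with b
      ring
    rw [this]
    exact star_mul_self_nonneg _

lemma psd_diag_nonneg {k : ℕ} {N : Matrix (Fin k) (Fin k) ℂ} (hN : N.PosSemidef) (j : Fin k) :
    0 ≤ N j j := by
  have := hN.dotProduct_mulVec_nonneg (Pi.single j 1)
  simpa [dotProduct, Matrix.mulVec, Pi.single_apply, Finset.sum_ite_eq] using this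


/-- **Trace Jensen inequality for contractive positive maps (Petz).**
If `Φ` is a positive linear map from `n×n` to `m×m` complex matrices with `Φ(1) ≤ 1`
(in the Loewner order, i.e. `1 - Φ(1)` is positive semidefinite), `x` is positive
semidefinite and `f : ℝ → ℝ` is continuous, convex on `[0, ∞)` and `f(0) = 0`, then `Φ(x)` is
positive semidefinite and `Tr f(Φ(x)) ≤ Tr Φ(f(x))`. -/
theorem trace_jensen_contractive_positive_map_of_posSemidef {n m : ℕ}
    (Φ : Matrix (Fin n) (Fin n) ℂ →ₗ[ℂ] Matrix (Fin m) (Fin m) ℂ)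
    (hΦpos : ∀ y : Matrix (Fin n) (Fin n) ℂ, y.PosSemidef → (Φ y).PosSemidef)
    (hΦ1 : (1 - Φ 1).PosSemidef)
    {x : Matrix (Fin n) (Fin n) ℂ} (hx : x.PosSemidef)
    (f : ℝ → ℝ) (hf : Continuous f) (hconv : ConvexOn ℝ (Set.Ici (0 : ℝ)) f)
    (hf0 : f 0 = 0) :
    ∃ hΦx : (Φ x).PosSemidef,
      (matFun hΦx.isHermitian f).trace ≤ (Φ (matFun hx.isHermitian f)).trace := by
  have hΦx : (Φ x).PosSemidef := hΦpos x hx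
  refine ⟨hΦx, ?_⟩
  have hB : (Φ x).IsHermitian := hΦx.isHermitian
  have hxh : x.IsHermitian := hx.isHermitian
  set U : Matrix (Fin m) (Fin m) ℂ := ↑(hB.eigenvectorUnitary) with hUdef
  set V : Matrix (Fin n) (Fin n) ℂ := ↑(hxh.eigenvectorUnitary) with hVdef
  set μ : Fin m → ℝ := hB.eigenvalues with hμdef
  set lam : Fin n → ℝ := hxh.eigenvalues with hlamdef
  set P : Fin n → Matrix (Fin n) (Fin n) ℂ :=
    fun i => Matrix.vecMulVec (fun a => V a i) (fun b => star (V b i)) with hPdef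
  set ψ : Fin m → Matrix (Fin m) (Fin m) ℂ → ℂ := fun j M => (Uᴴ * M * U) j j with hψdef
  have hUU : U * Uᴴ = 1 := by
    simpa [Matrix.star_eq_conjTranspose] using Unitary.coe_mul_star_self hB.eigenvectorUnitary
  have hUU' : Uᴴ * U = 1 := by
    simpa [Matrix.star_eq_conjTranspose] using Unitary.coe_star_mul_self hB.eigenvectorUnitary
  have hVV : V * Vᴴ = 1 := by
    simpa [Matrix.star_eq_conjTranspose] using Unitary.coe_mul_star_self hxh.eigenvectorUnitary
  -- trace via ψ
  have htrace : ∀ M : Matrix (Fin m) (Fin m) ℂ, M.trace = ∑ j, ψ j M := by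
    intro M
    have h1 : ∑ j, ψ j M = (Uᴴ * M * U).trace := by simp [hψdef, Matrix.trace]
    rw [h1, Matrix.trace_mul_cycle, hUU, Matrix.one_mul]
  -- ψ of psd matrices
  have hψpsd : ∀ (M : Matrix (Fin m) (Fin m) ℂ), M.PosSemidef → ∀ j, 0 ≤ ψ j M := by
    intro M hM j
    exact psd_diag_nonneg (hM.conjTranspose_mul_mul_same U) j
  -- ψ linearity for sums of scalar multiples
  have hψlin : ∀ (j : Fin m) (c : Fin n → ℂ) (N : Fin n → Matrix (Fin m) (Fin m) ℂ),
      ψ j (∑ i, c i • N i) = ∑ i, c i * ψ j (N i) := by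
    intro j c N
    simp [hψdef, Matrix.mul_sum, Matrix.sum_mul, Matrix.mul_smul, Matrix.smul_mul,
      Matrix.sum_apply]
  -- value of ψ on Φ x
  have hψB : ∀ j, ψ j (Φ x) = (μ j : ℂ) := by
    intro j
    have h : star (hB.eigenvectorUnitary : Matrix (Fin m) (Fin m) ℂ) * Φ x
        * (hB.eigenvectorUnitary : Matrix (Fin m) (Fin m) ℂ)
        = diagonal (RCLike.ofReal ∘ hB.eigenvalues) := by
      have hs := hB.spectral_theorem
      rw [Unitary.conjStarAlgAut_apply] at hs
      calc star (hB.eigenvectorUnitary : Matrix (Fin m) (Fin m) ℂ) * Φ x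
            * (hB.eigenvectorUnitary : Matrix (Fin m) (Fin m) ℂ)
          = star (hB.eigenvectorUnitary : Matrix (Fin m) (Fin m) ℂ)
            * ((hB.eigenvectorUnitary : Matrix (Fin m) (Fin m) ℂ)
              * diagonal (RCLike.ofReal ∘ hB.eigenvalues)
              * star (hB.eigenvectorUnitary : Matrix (Fin m) (Fin m) ℂ))
            * (hB.eigenvectorUnitary : Matrix (Fin m) (Fin m) ℂ) := by rw [← hs]
        _ = diagonal (RCLike.ofReal ∘ hB.eigenvalues) := by
          simp only [mul_assoc, Unitary.coe_star_mul_self, mul_one]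
          rw [← mul_assoc, Unitary.coe_star_mul_self, one_mul]
    rw [Matrix.star_eq_conjTranspose] at h
    simp [hψdef, ← hUdef] at h ⊢
    rw [h]
    simp [Matrix.diagonal_apply_eq]
    rfl
  -- spectral decompositions
  have hxsum : x = ∑ i, (lam i : ℂ) • P i := by
    conv_lhs => rw [hxh.spectral_theorem]
    rw [Unitary.conjStarAlgAut_apply, Matrix.star_eq_conjTranspose, ← hVdef]
    exact unitary_diag_sum V _
  have hfxsum : matFun hxh f = ∑ i, ((f (lam i) : ℝ) : ℂ) • P i := by
    show hxh.cfc f = _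
    rw [Matrix.IsHermitian.cfc, Unitary.conjStarAlgAut_apply, Matrix.star_eq_conjTranspose, ← hVdef]
    exact unitary_diag_sum V _
  -- the weights
  set t : Fin n → Fin m → ℝ := fun i j => (ψ j (Φ (P i))).re with htdef
  have ht : ∀ i j, ψ j (Φ (P i)) = ((t i j : ℝ) : ℂ) ∧ 0 ≤ t i j := by
    intro i j
    have hpsd := hψpsd _ (hΦpos _ (psd_vecMulVec (fun a => V a i))) j
    rw [Complex.nonneg_iff] at hpsd
    constructor
    · exact Complex.ext rfl (by rw [Complex.ofReal_im]; exact hpsd.2.symm.trans Complex.zero_im)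
    · exact hpsd.1
  -- eigenvalues of Φ x as convex-ish combinations
  have hμeq : ∀ j, μ j = ∑ i, t i j * lam i := by
    intro j
    have h1 : (μ j : ℂ) = ∑ i, (lam i : ℂ) * ψ j (Φ (P i)) := by
      rw [← hψB j]
      conv_lhs => rw [hxsum]
      rw [map_sum]
      simp only [_root_.map_smul]
      simpa [smul_eq_mul] using hψlin j (fun i => (lam i : ℂ)) (fun i => Φ (P i))
    have h2 : (μ j : ℂ) = ((∑ i, t i j * lam i : ℝ) : ℂ) := by
      rw [h1]
      push_cast
      congr 1 with i
      rw [(ht i j).1]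
      push_cast
      ring
    exact_mod_cast h2
  -- sum of P i is 1
  have hPsum : ∑ i, P i = 1 := by
    ext a b
    have h := congrArg (fun M => M a b) hVV
    simp only [Matrix.mul_apply, Matrix.conjTranspose_apply] at h
    simpa [hPdef, Matrix.sum_apply, Matrix.vecMulVec_apply] using h
  -- weights sum ≤ 1
  have htsum : ∀ j, ∑ i, t i j ≤ 1 := by
    intro j
    have h0 : 0 ≤ ψ j (1 - Φ 1) := hψpsd _ hΦ1 j
    have hsub : ψ j (1 - Φ 1) = ψ j 1 - ψ j (Φ 1) := by
      simp [hψdef, Matrix.mul_sub, Matrix.sub_mul, Matrix.sub_apply]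
    have hψ1 : ψ j 1 = 1 := by
      simp [hψdef, hUU', Matrix.one_apply]
    have hΦ1val : ψ j (Φ 1) = ((∑ i, t i j : ℝ) : ℂ) := by
      have : (1 : Matrix (Fin n) (Fin n) ℂ) = ∑ i, (1 : ℂ) • P i := by
        simpa using hPsum.symm
      rw [this, map_sum]
      simp only [_root_.map_smul]
      rw [show (∑ i, (1:ℂ) • Φ (P i)) = ∑ i, Φ (P i) by simp]
      have := hψlin j (fun _ => (1:ℂ)) (fun i => Φ (P i))
      simp only [one_smul, one_mul] at this
      rw [this]
      push_cast
      congr 1 with i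
      exact (ht i j).1
    rw [hsub, hψ1, hΦ1val] at h0
    rw [Complex.nonneg_iff] at h0
    have := h0.1
    simpa using this
  -- compute traces
  have hLHS : (matFun hB f).trace = ∑ j, ((f (μ j) : ℝ) : ℂ) := by
    show (hB.cfc f).trace = _
    rw [Matrix.IsHermitian.cfc, Unitary.conjStarAlgAut_apply, Matrix.star_eq_conjTranspose, ← hUdef,
      Matrix.trace_mul_cycle, hUU', Matrix.one_mul, Matrix.trace_diagonal]
    rfl
  have hRHS : (Φ (matFun hxh f)).trace = ((∑ j, ∑ i, t i j * f (lam i) : ℝ) : ℂ) := by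
    rw [htrace]
    push_cast
    congr 1 with j
    rw [hfxsum, map_sum]
    simp only [_root_.map_smul]
    rw [hψlin j (fun i => ((f (lam i) : ℝ) : ℂ)) (fun i => Φ (P i))]
    push_cast
    congr 1 with i
    rw [(ht i j).1]
    push_cast
    ring
  rw [hLHS, hRHS]
  have hLHS' : (∑ j, ((f (μ j) : ℝ) : ℂ)) = ((∑ j, f (μ j) : ℝ) : ℂ) := by push_cast; rfl
  rw [hLHS']
  rw [Complex.real_le_real]
  apply Finset.sum_le_sum
  intro j _
  rw [hμeq j]
  have := jensen_sub f hconv hf0 (fun i => t i j) lam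
    (fun i => (ht i j).2) (fun i => hx.eigenvalues_nonneg i) (htsum j)
  simpa using this
end

section
/- Let Φ be a positive unital linear map from the n×n complex matrices to the m×m complex matrices, let x be a Hermitian n×n complex matrix, and let f : ℝ → ℝ be a continuous convex function. Then Φ(x) is Hermitian and Tr f(Φ(x)) ≤ Tr Φ(f(x)). -/
open scoped ComplexOrder

open Matrix
private lemma diag_eq_sum {k : ℕ} (d : Fin k → ℂ) :
    Matrix.diagonal d = ∑ j, d j • Matrix.single j j 1 := by
  ext i l
  simp only [Matrix.sum_apply, Matrix.smul_apply, Matrix.single, Matrix.of_apply,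
    smul_ite, smul_eq_mul, mul_one, smul_zero, Matrix.diagonal_apply]
  rw [Finset.sum_eq_single i] <;> aesop

noncomputable def specProj {k : ℕ} {A : Matrix (Fin k) (Fin k) ℂ} (hA : A.IsHermitian)
    (j : Fin k) : Matrix (Fin k) (Fin k) ℂ :=
  (hA.eigenvectorUnitary : Matrix (Fin k) (Fin k) ℂ) * Matrix.single j j 1 *
    star (hA.eigenvectorUnitary : Matrix (Fin k) (Fin k) ℂ)

lemma specProj_posSemidef {k : ℕ} {A : Matrix (Fin k) (Fin k) ℂ} (hA : A.IsHermitian)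
    (j : Fin k) : (specProj hA j).PosSemidef := by
  have h1 : (Matrix.single j j (1:ℂ)) = Matrix.diagonal (Pi.single j 1) := by
    ext i l
    simp [Matrix.diagonal_apply, Matrix.single, Pi.single_apply]
    aesop
  have h2 : (Matrix.single j j (1:ℂ)).PosSemidef := by
    rw [h1]
    refine Matrix.PosSemidef.diagonal ?_
    intro i
    by_cases h : i = j <;> simp [Pi.single_apply, h]
  have := h2.mul_mul_conjTranspose_same (hA.eigenvectorUnitary : Matrix (Fin k) (Fin k) ℂ)
  rwa [← Matrix.star_eq_conjTranspose] at this

lemma sum_specProj {k : ℕ} {A : Matrix (Fin k) (Fin k) ℂ} (hA : A.IsHermitian) :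
    ∑ j, specProj hA j = 1 := by
  have : (∑ j, Matrix.single j j (1:ℂ)) = (1 : Matrix (Fin k) (Fin k) ℂ) := by
    rw [show (1 : Matrix (Fin k) (Fin k) ℂ) = Matrix.diagonal (fun _ => 1) from rfl,
      diag_eq_sum]
    simp
  calc ∑ j, specProj hA j
      = (hA.eigenvectorUnitary : Matrix (Fin k) (Fin k) ℂ) * (∑ j, Matrix.single j j 1) *
        star (hA.eigenvectorUnitary : Matrix (Fin k) (Fin k) ℂ) := by
        simp only [specProj, Finset.sum_mul, Matrix.mul_sum]
    _ = 1 := by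
        rw [this, mul_one, (Matrix.mem_unitaryGroup_iff).mp (hA.eigenvectorUnitary).2]

lemma cfc_eq_sum_specProj {k : ℕ} {A : Matrix (Fin k) (Fin k) ℂ} (hA : A.IsHermitian)
    (g : ℝ → ℝ) : hA.cfc g = ∑ j, ((g (hA.eigenvalues j) : ℝ) : ℂ) • specProj hA j := by
  rw [Matrix.IsHermitian.cfc, Unitary.conjStarAlgAut_apply, show (RCLike.ofReal ∘ g ∘ hA.eigenvalues : Fin k → ℂ)
    = fun j => ((g (hA.eigenvalues j) : ℝ) : ℂ) from rfl, diag_eq_sum]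
  simp only [specProj, Finset.sum_mul, Matrix.mul_sum, Matrix.smul_mul, Matrix.mul_smul]

lemma eq_sum_specProj {k : ℕ} {A : Matrix (Fin k) (Fin k) ℂ} (hA : A.IsHermitian) :
    A = ∑ j, ((hA.eigenvalues j : ℝ) : ℂ) • specProj hA j := by
  have := cfc_eq_sum_specProj hA id
  simp only [id] at this
  rw [← this, Matrix.IsHermitian.cfc]
  exact hA.spectral_theorem

private lemma diag_entry_nonneg {k : ℕ} {M : Matrix (Fin k) (Fin k) ℂ} (hM : M.PosSemidef)
    (i : Fin k) : 0 ≤ M i i := by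
  have := hM.dotProduct_mulVec_nonneg (Pi.single i 1)
  simpa [dotProduct, Matrix.mulVec, Pi.single_apply] using this

/-- **Trace Jensen inequality for positive unital maps, Hermitian version.**
If `Φ` is a positive unital linear map from `n×n` to `m×m` complex matrices, `x` is Hermitian
and `f : ℝ → ℝ` is a continuous convex function, then `Φ(x)` is Hermitian and
`Tr f(Φ(x)) ≤ Tr Φ(f(x))`. -/
theorem trace_jensen_unital_positive_map_of_isHermitian {n m : ℕ}
    (Φ : Matrix (Fin n) (Fin n) ℂ →ₗ[ℂ] Matrix (Fin m) (Fin m) ℂ)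
    (hΦpos : ∀ y : Matrix (Fin n) (Fin n) ℂ, y.PosSemidef → (Φ y).PosSemidef)
    (hΦ1 : Φ 1 = 1)
    {x : Matrix (Fin n) (Fin n) ℂ} (hx : x.IsHermitian)
    (f : ℝ → ℝ) (hf : Continuous f) (hconv : ConvexOn ℝ Set.univ f) :
    ∃ hΦx : (Φ x).IsHermitian,
      (matFun hΦx f).trace ≤ (Φ (matFun hx f)).trace := by
  classical
  set μ := hx.eigenvalues with hμdef
  set P : Fin n → Matrix (Fin n) (Fin n) ℂ := specProj hx with hPdef
  have hΦP : ∀ j, (Φ (P j)).PosSemidef := fun j => hΦpos _ (specProj_posSemidef hx j)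
  have hΦxsum : Φ x = ∑ j, ((μ j : ℝ) : ℂ) • Φ (P j) := by
    conv_lhs => rw [eq_sum_specProj hx]
    rw [map_sum]
    simp only [_root_.map_smul]
    rfl
  have hΦx : (Φ x).IsHermitian := by
    rw [hΦxsum]
    show _ᴴ = _
    rw [Matrix.conjTranspose_sum]
    refine Finset.sum_congr rfl fun j _ => ?_
    rw [Matrix.conjTranspose_smul, (hΦP j).isHermitian.eq, Complex.star_def,
      Complex.conj_ofReal]
  refine ⟨hΦx, ?_⟩
  set V : Matrix (Fin m) (Fin m) ℂ := (hΦx.eigenvectorUnitary : Matrix (Fin m) (Fin m) ℂ)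
    with hVdef
  set lam := hΦx.eigenvalues with hlamdef
  have hVV : star V * V = 1 := Matrix.mem_unitaryGroup_iff'.mp hΦx.eigenvectorUnitary.2
  have hVV' : V * star V = 1 := Matrix.mem_unitaryGroup_iff.mp hΦx.eigenvectorUnitary.2
  have htr : ∀ M : Matrix (Fin m) (Fin m) ℂ, M.trace = ∑ i, (star V * M * V) i i := by
    intro M
    have h := Matrix.trace_mul_cycle (star V) M V
    rw [hVV', one_mul] at h
    rw [← h]
    simp [Matrix.trace, Matrix.diag]
  set C : Fin n → Fin m → ℂ := fun j i => (star V * Φ (P j) * V) i i with hCdef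
  have hC0 : ∀ j i, 0 ≤ C j i := by
    intro j i
    have hpsd : (star V * Φ (P j) * V).PosSemidef := by
      have := (hΦP j).conjTranspose_mul_mul_same V
      rwa [← Matrix.star_eq_conjTranspose] at this
    exact diag_entry_nonneg hpsd i
  have hCsum : ∀ i, ∑ j, C j i = 1 := by
    intro i
    have h1 : ∑ j, star V * Φ (P j) * V = 1 := by
      calc ∑ j, star V * Φ (P j) * V = star V * Φ (∑ j, P j) * V := by
            rw [map_sum, Matrix.mul_sum, Finset.sum_mul]
        _ = 1 := by rw [hPdef, sum_specProj hx, hΦ1, mul_one, hVV]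
    calc ∑ j, C j i = (∑ j, star V * Φ (P j) * V) i i := by
          simp [hCdef, Matrix.sum_apply]
      _ = 1 := by rw [h1]; simp [Matrix.one_apply]
  have hlam : ∀ i, ((lam i : ℝ) : ℂ) = ∑ j, ((μ j : ℝ) : ℂ) * C j i := by
    intro i
    have hdiag : star V * Φ x * V = diagonal (RCLike.ofReal ∘ lam) := by
      have := hΦx.conjStarAlgAut_star_eigenvectorUnitary
      rw [Unitary.conjStarAlgAut_star_apply] at this
      exact this
    have h2 : (star V * Φ x * V) i i = ((lam i : ℝ) : ℂ) := by
      rw [hdiag]; simp [Matrix.diagonal_apply]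
    rw [← h2, hΦxsum]
    simp only [Matrix.mul_sum, Finset.sum_mul, Matrix.mul_smul, Matrix.smul_mul,
      Matrix.sum_apply, Matrix.smul_apply, smul_eq_mul]
    rfl
  set r : Fin n → Fin m → ℝ := fun j i => (C j i).re with hrdef
  have hCr : ∀ j i, C j i = ((r j i : ℝ) : ℂ) := by
    intro j i
    have h := hC0 j i
    rw [Complex.le_def] at h
    exact Complex.ext rfl (by simpa using h.2.symm)
  have hr0 : ∀ j i, 0 ≤ r j i := by
    intro j i
    have h := hC0 j i
    rw [Complex.le_def] at h
    simpa using h.1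
  have hrsum : ∀ i, ∑ j, r j i = 1 := by
    intro i
    have h := hCsum i
    simp only [hCr] at h
    exact_mod_cast h
  have hlamr : ∀ i, lam i = ∑ j, r j i * μ j := by
    intro i
    have h := hlam i
    simp only [hCr, ← Complex.ofReal_mul, ← Complex.ofReal_sum] at h
    have := Complex.ofReal_injective h
    rw [this]
    exact Finset.sum_congr rfl fun j _ => mul_comm _ _
  have hjensen : ∀ i, f (lam i) ≤ ∑ j, r j i * f (μ j) := by
    intro i
    have h := hconv.map_sum_le (t := Finset.univ) (w := fun j => r j i) (p := μ)
      (fun j _ => hr0 j i) (hrsum i) (fun j _ => Set.mem_univ _)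
    simpa [smul_eq_mul, ← hlamr i] using h
  -- LHS trace
  have hLHS : (matFun hΦx f).trace = ∑ i, ((f (lam i) : ℝ) : ℂ) := by
    rw [matFun, Matrix.IsHermitian.cfc, Unitary.conjStarAlgAut_apply, Matrix.trace_mul_cycle, ← hVdef, hVV, one_mul,
      Matrix.trace_diagonal]
    rfl
  -- RHS trace
  have hRHS : (Φ (matFun hx f)).trace = ∑ i, ((∑ j, r j i * f (μ j) : ℝ) : ℂ) := by
    have h1 : Φ (matFun hx f) = ∑ j, ((f (μ j) : ℝ) : ℂ) • Φ (P j) := by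
      rw [matFun, cfc_eq_sum_specProj hx f, map_sum]
      simp only [_root_.map_smul]
      rfl
    rw [h1, Matrix.trace_sum]
    simp only [Matrix.trace_smul, smul_eq_mul]
    calc ∑ j, ((f (μ j) : ℝ) : ℂ) * (Φ (P j)).trace
        = ∑ j, ∑ i, ((f (μ j) : ℝ) : ℂ) * C j i := by
          refine Finset.sum_congr rfl fun j _ => ?_
          rw [htr (Φ (P j)), Finset.mul_sum]
      _ = ∑ i, ∑ j, ((f (μ j) : ℝ) : ℂ) * C j i := Finset.sum_comm
      _ = ∑ i, ((∑ j, r j i * f (μ j) : ℝ) : ℂ) := by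
          refine Finset.sum_congr rfl fun i _ => ?_
          push_cast
          exact Finset.sum_congr rfl fun j _ => by rw [hCr, mul_comm]
  rw [hLHS, hRHS]
  rw [← Complex.ofReal_sum, ← Complex.ofReal_sum, Complex.real_le_real]
  exact Finset.sum_le_sum fun i _ => hjensen i
end

section
/- Let Φ be a positive linear map from the n×n complex matrices to the m×m complex matrices with Φ(1) ≤ 1 (a contractive positive map), let x be a Hermitian n×n complex matrix, and let f : ℝ → ℝ be a continuous convex function with f(0) = 0. Then Φ(x) is Hermitian and Tr f(Φ(x)) ≤ Tr Φ(f(x)). -/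
open scoped ComplexOrder

open Matrix

lemma psd_diag_nonneg_s6 {k : ℕ} {M : Matrix (Fin k) (Fin k) ℂ} (hM : M.PosSemidef)
    (j : Fin k) : 0 ≤ M j j := by
  have := hM.2 (Finsupp.single j 1)
  simpa [dotProduct, mulVec, Pi.single_apply] using this

lemma matFun_eq_sum {k : ℕ} {A : Matrix (Fin k) (Fin k) ℂ} (hA : A.IsHermitian) (g : ℝ → ℝ) :
    hA.cfc g = ∑ i, (g (hA.eigenvalues i) : ℂ) •
      ((hA.eigenvectorUnitary : Matrix (Fin k) (Fin k) ℂ) * Matrix.diagonal (Pi.single i 1) *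
        star (hA.eigenvectorUnitary : Matrix (Fin k) (Fin k) ℂ)) := by
  rw [Matrix.IsHermitian.cfc]
  have key : (Matrix.diagonal (RCLike.ofReal ∘ g ∘ hA.eigenvalues) : Matrix (Fin k) (Fin k) ℂ)
      = ∑ i, (g (hA.eigenvalues i) : ℂ) • Matrix.diagonal (Pi.single i 1) := by
    ext j l
    by_cases h : j = l
    · subst h
      simp [Matrix.sum_apply, Matrix.diagonal_apply, Pi.single_apply]
    · simp [Matrix.sum_apply, Matrix.diagonal_apply, h]
  rw [key, Unitary.conjStarAlgAut_apply, Finset.mul_sum, Finset.sum_mul]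
  exact Finset.sum_congr rfl fun i _ => by rw [mul_smul_comm, smul_mul_assoc]


/-- **Trace Jensen inequality for contractive positive maps, Hermitian version.**
If `Φ` is a positive linear map from `n×n` to `m×m` complex matrices with `Φ(1) ≤ 1`
(in the Loewner order, i.e. `1 - Φ(1)` is positive semidefinite), `x` is Hermitian
and `f : ℝ → ℝ` is a continuous convex function with `f(0) = 0`, then `Φ(x)` is Hermitian and
`Tr f(Φ(x)) ≤ Tr Φ(f(x))`. -/
theorem trace_jensen_contractive_positive_map_of_isHermitian {n m : ℕ}
    (Φ : Matrix (Fin n) (Fin n) ℂ →ₗ[ℂ] Matrix (Fin m) (Fin m) ℂ)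
    (hΦpos : ∀ y : Matrix (Fin n) (Fin n) ℂ, y.PosSemidef → (Φ y).PosSemidef)
    (hΦ1 : (1 - Φ 1).PosSemidef)
    {x : Matrix (Fin n) (Fin n) ℂ} (hx : x.IsHermitian)
    (f : ℝ → ℝ) (hf : Continuous f) (hconv : ConvexOn ℝ Set.univ f)
    (hf0 : f 0 = 0) :
    ∃ hΦx : (Φ x).IsHermitian,
      (matFun hΦx f).trace ≤ (Φ (matFun hx f)).trace := by
  classical
  set V : Matrix (Fin n) (Fin n) ℂ := (hx.eigenvectorUnitary : Matrix (Fin n) (Fin n) ℂ) with hV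
  set μ : Fin n → ℝ := hx.eigenvalues with hμ
  set P : Fin n → Matrix (Fin n) (Fin n) ℂ :=
    fun i => V * Matrix.diagonal (Pi.single i 1) * star V with hP
  have hPpsd : ∀ i, (P i).PosSemidef := by
    intro i
    have hd : (Matrix.diagonal (Pi.single i 1) : Matrix (Fin n) (Fin n) ℂ).PosSemidef :=
      Matrix.PosSemidef.diagonal (by
        intro j
        by_cases h : j = i <;> simp [Pi.single_apply, h])
    simpa [hP, Matrix.star_eq_conjTranspose] using hd.mul_mul_conjTranspose_same V
  -- x as a combination of the P i
  have hxd : x = ∑ i, (μ i : ℂ) • P i := by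
    have h1 : hx.cfc id = ∑ i, (μ i : ℂ) • P i := matFun_eq_sum hx id
    have h2 : hx.cfc id = x := by
      rw [Matrix.IsHermitian.cfc]
      exact hx.spectral_theorem.symm
    rw [← h2, h1]
  -- f(x) as a combination of the P i
  have hfxd : matFun hx f = ∑ i, (f (μ i) : ℂ) • P i := matFun_eq_sum hx f
  -- sum of P i equals 1
  have hPsum : ∑ i, P i = 1 := by
    have h1 : hx.cfc (fun _ => 1) = ∑ i, P i := by
      simpa using matFun_eq_sum hx (fun _ => 1)
    have h2 : hx.cfc (fun _ => 1) = 1 := by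
      rw [Matrix.IsHermitian.cfc]
      have hd : (Matrix.diagonal (RCLike.ofReal ∘ (fun _ => (1:ℝ)) ∘ μ) :
          Matrix (Fin n) (Fin n) ℂ) = 1 := by
        ext j l; by_cases h : j = l <;> simp [Matrix.diagonal_apply, Matrix.one_apply, h]
      rw [hd, Unitary.conjStarAlgAut_apply, mul_one, Matrix.mem_unitaryGroup_iff.mp hx.eigenvectorUnitary.2]
    rw [← h1, h2]
  -- Φ x is Hermitian
  have hΦx : (Φ x).IsHermitian := by
    rw [Matrix.IsHermitian, hxd, map_sum, conjTranspose_sum]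
    refine Finset.sum_congr rfl fun i _ => ?_
    rw [_root_.map_smul, conjTranspose_smul, (hΦpos _ (hPpsd i)).isHermitian.eq,
      Complex.star_def, Complex.conj_ofReal]
  refine ⟨hΦx, ?_⟩
  set U : Matrix (Fin m) (Fin m) ℂ := (hΦx.eigenvectorUnitary : Matrix (Fin m) (Fin m) ℂ) with hU
  set lam : Fin m → ℝ := hΦx.eigenvalues with hlam
  have hU1 : star U * U = 1 := Matrix.mem_unitaryGroup_iff'.mp hΦx.eigenvectorUnitary.2
  have hU2 : U * star U = 1 := Matrix.mem_unitaryGroup_iff.mp hΦx.eigenvectorUnitary.2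
  have hUdiag : star U * (Φ x) * U = Matrix.diagonal (RCLike.ofReal ∘ lam) := by
    conv_lhs => rw [hΦx.spectral_theorem]
    simp only [Unitary.conjStarAlgAut_apply, mul_assoc, ← hU, ← hlam]
    rw [hU1, mul_one, ← mul_assoc, hU1, one_mul]
  set c : Fin m → Fin n → ℂ := fun j i => (star U * Φ (P i) * U) j j with hc
  have hcpsd : ∀ i, (star U * Φ (P i) * U).PosSemidef := by
    intro i
    simpa [Matrix.star_eq_conjTranspose] using
      (hΦpos _ (hPpsd i)).conjTranspose_mul_mul_same U
  have hcnn : ∀ j i, 0 ≤ c j i := fun j i => psd_diag_nonneg_s6 (hcpsd i) j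
  set t : Fin m → Fin n → ℝ := fun j i => (c j i).re with ht
  have htnn : ∀ j i, 0 ≤ t j i := fun j i => (Complex.nonneg_iff.mp (hcnn j i)).1
  have hcre : ∀ j i, c j i = (t j i : ℂ) := by
    intro j i
    have him := (Complex.nonneg_iff.mp (hcnn j i)).2
    exact Complex.ext rfl him.symm
  -- conjugated Φ x
  have hconj : ∀ g : ℝ → ℝ, star U * Φ (hx.cfc g) * U
      = ∑ i, (g (μ i) : ℂ) • (star U * Φ (P i) * U) := by
    intro g
    rw [matFun_eq_sum hx g, map_sum, Finset.mul_sum, Finset.sum_mul]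
    refine Finset.sum_congr rfl fun i _ => ?_
    rw [_root_.map_smul, mul_smul_comm, smul_mul_assoc]
  -- eigenvalue identity
  have hrow : ∀ j, lam j = ∑ i, t j i * μ i := by
    intro j
    have h1 : star U * Φ x * U = ∑ i, (μ i : ℂ) • (star U * Φ (P i) * U) := by
      have := hconj id
      rw [show hx.cfc id = x from by rw [Matrix.IsHermitian.cfc]; exact hx.spectral_theorem.symm]
        at this
      simpa using this
    have h2 := h1.symm.trans hUdiag
    have h3 := congrArg (fun M : Matrix (Fin m) (Fin m) ℂ => M j j) h2
    simp only [Matrix.sum_apply, Matrix.smul_apply, smul_eq_mul,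
      Matrix.diagonal_apply_eq, Function.comp_apply] at h3
    have h4 : (∑ i, (μ i : ℂ) * c j i) = ((∑ i, t j i * μ i : ℝ) : ℂ) := by
      push_cast
      exact Finset.sum_congr rfl fun i _ => by rw [hcre j i]; ring
    rw [h4] at h3
    exact Complex.ofReal_inj.mp h3.symm
  -- subprobability: ∑ i, t j i ≤ 1
  have htsum : ∀ j, ∑ i, t j i ≤ 1 := by
    intro j
    have hsumc : ∑ i, c j i = (star U * Φ 1 * U) j j := by
      have h1 : star U * Φ 1 * U = ∑ i, star U * Φ (P i) * U := by
        rw [← hPsum, map_sum, Finset.mul_sum, Finset.sum_mul]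
      rw [h1, Matrix.sum_apply]
    have hpsd : (star U * (1 - Φ 1) * U).PosSemidef := by
      simpa [Matrix.star_eq_conjTranspose] using hΦ1.conjTranspose_mul_mul_same U
    have h2 := psd_diag_nonneg_s6 hpsd j
    have h3 : star U * (1 - Φ 1) * U = 1 - star U * Φ 1 * U := by
      rw [mul_sub, sub_mul, mul_one, hU1]
    rw [h3] at h2
    have h4 : 0 ≤ (1 - star U * Φ 1 * U) j j := h2
    rw [Matrix.sub_apply, Matrix.one_apply_eq, ← hsumc] at h4
    have h5 : (∑ i, c j i) = ((∑ i, t j i : ℝ) : ℂ) := by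
      push_cast
      exact Finset.sum_congr rfl fun i _ => hcre j i
    rw [h5] at h4
    have := (Complex.nonneg_iff.mp h4).1
    simp at this
    linarith
  -- Jensen step
  have hjen : ∀ j, f (lam j) ≤ ∑ i, t j i * f (μ i) := by
    intro j
    have h₁ : (1 - ∑ i, t j i) + ∑ i, (t j) i = 1 := by ring
    have hkey := hconv.map_add_sum_le (t := Finset.univ) (w := t j) (p := μ) (q := 0)
      (fun i _ => htnn j i) h₁ (fun i _ => Set.mem_univ _) (by linarith [htsum j])
      (Set.mem_univ _)
    simp only [smul_eq_mul, smul_zero, zero_add, hf0, mul_zero] at hkey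
    rw [← hrow j] at hkey
    linarith
  -- traces
  have hLHS : (matFun hΦx f).trace = ∑ j, (f (lam j) : ℂ) := by
    rw [matFun, Matrix.IsHermitian.cfc, Unitary.conjStarAlgAut_apply, Matrix.trace_mul_cycle, hU1, one_mul,
      Matrix.trace_diagonal]
    rfl
  have hRHS : (Φ (matFun hx f)).trace = ∑ j, ∑ i, (f (μ i) : ℂ) * c j i := by
    have h2 : (Φ (matFun hx f)).trace = (star U * Φ (matFun hx f) * U).trace := by
      rw [Matrix.trace_mul_cycle, hU2, one_mul]
    rw [h2, matFun, hconj f, Matrix.trace]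
    refine Finset.sum_congr rfl fun j _ => ?_
    simp [hc, Matrix.diag, Matrix.sum_apply]
  rw [hLHS, hRHS]
  refine Finset.sum_le_sum fun j _ => ?_
  have h6 : (∑ i, (f (μ i) : ℂ) * c j i) = ((∑ i, t j i * f (μ i) : ℝ) : ℂ) := by
    push_cast
    exact Finset.sum_congr rfl fun i _ => by rw [hcre j i]; ring
  rw [h6]
  exact_mod_cast hjen j
end

section
/- Let a be an n×n complex matrix with a* a ≤ 1 (a contraction), let x be a Hermitian n×n complex matrix, and let f : ℝ → ℝ be a continuous convex function with f(0) = 0. Then a* x a is Hermitian and Tr f(a* x a) ≤ Tr(a* · f(x) · a). -/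
open Matrix
open scoped ComplexOrder

lemma jensen_subconvex {m : ℕ} (f : ℝ → ℝ) (hconv : ConvexOn ℝ Set.univ f) (hf0 : f 0 = 0)
    (c lam : Fin m → ℝ) (hc : ∀ j, 0 ≤ c j) (hc1 : ∑ j, c j ≤ 1) :
    f (∑ j, c j * lam j) ≤ ∑ j, c j * f (lam j) := by
  have h := hconv.map_add_sum_le (t := Finset.univ) (w := c) (p := lam)
    (v := 1 - ∑ j, c j) (q := 0)
    (fun j _ => hc j) (by ring) (fun j _ => trivial) (by linarith) trivial
  simpa [hf0, smul_eq_mul] using h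


/-- **Trace Jensen inequality for conjugation by a contraction (Harada–Kosaki, matrix case).**
If `a` is an `n×n` complex matrix with `a* a ≤ 1` (i.e. `1 - a* a` is positive semidefinite),
`x` is Hermitian and `f : ℝ → ℝ` is a continuous convex function with `f(0) = 0`, then `a* x a`
is Hermitian and `Tr f(a* x a) ≤ Tr (a* · f(x) · a)`. -/
theorem trace_jensen_conjugation_by_contraction {n : ℕ}
    (a : Matrix (Fin n) (Fin n) ℂ) (ha : (1 - aᴴ * a).PosSemidef)
    {x : Matrix (Fin n) (Fin n) ℂ} (hx : x.IsHermitian)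
    (f : ℝ → ℝ) (hf : Continuous f) (hconv : ConvexOn ℝ Set.univ f)
    (hf0 : f 0 = 0) :
    ∃ hK : (aᴴ * x * a).IsHermitian,
      (matFun hK f).trace ≤ (aᴴ * matFun hx f * a).trace := by
  have hK : (aᴴ * x * a).IsHermitian := isHermitian_conjTranspose_mul_mul a hx
  refine ⟨hK, ?_⟩
  set U : Matrix (Fin n) (Fin n) ℂ := (hx.eigenvectorUnitary : Matrix (Fin n) (Fin n) ℂ) with hUdef
  set V : Matrix (Fin n) (Fin n) ℂ := (hK.eigenvectorUnitary : Matrix (Fin n) (Fin n) ℂ) with hVdef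
  set lam := hx.eigenvalues with hlamdef
  set mu := hK.eigenvalues with hmudef
  have hUU : star U * U = 1 := Matrix.mem_unitaryGroup_iff'.mp hx.eigenvectorUnitary.2
  have hUU' : U * star U = 1 := Matrix.mem_unitaryGroup_iff.mp hx.eigenvectorUnitary.2
  have hVV : star V * V = 1 := Matrix.mem_unitaryGroup_iff'.mp hK.eigenvectorUnitary.2
  have hVV' : V * star V = 1 := Matrix.mem_unitaryGroup_iff.mp hK.eigenvectorUnitary.2
  set b : Matrix (Fin n) (Fin n) ℂ := star U * a * V with hbdef
  set c : Fin n → Fin n → ℝ := fun i j => Complex.normSq (b j i) with hcdef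
  have hcnn : ∀ i j, 0 ≤ c i j := fun i j => Complex.normSq_nonneg _
  have hRC : ((RCLike.ofReal : ℝ → ℂ)) = Complex.ofReal := rfl
  -- star b
  have hstarb : star b = star V * aᴴ * U := by
    simp [hbdef, Matrix.star_mul, Matrix.star_eq_conjTranspose, Matrix.mul_assoc]
  -- key diagonal identity
  have key : (diagonal (RCLike.ofReal ∘ mu) : Matrix (Fin n) (Fin n) ℂ)
      = star b * diagonal (RCLike.ofReal ∘ lam) * b := by
    have h1 : star (hK.eigenvectorUnitary : Matrix (Fin n) (Fin n) ℂ) * (aᴴ * x * a) *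
        (hK.eigenvectorUnitary : Matrix (Fin n) (Fin n) ℂ)
        = diagonal (RCLike.ofReal ∘ hK.eigenvalues) := by
      have hs := hK.spectral_theorem
      rw [Unitary.conjStarAlgAut_apply, ← hVdef, ← hmudef] at hs
      rw [← hVdef, ← hmudef]
      calc star V * (aᴴ * x * a) * V
          = star V * (V * diagonal (RCLike.ofReal ∘ mu) * star V) * V := by rw [← hs]
        _ = _ := by
          simp only [Matrix.mul_assoc, hVV, Matrix.mul_one]
          rw [← Matrix.mul_assoc, hVV, Matrix.one_mul]
    rw [← hVdef, ← hmudef] at h1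
    rw [← h1, hstarb, hbdef]
    conv_lhs => rw [hx.spectral_theorem, Unitary.conjStarAlgAut_apply, ← hUdef, ← hlamdef]
    simp only [Matrix.mul_assoc]
  -- mu as subconvex combination
  have hmu : ∀ i, mu i = ∑ j, c i j * lam j := by
    intro i
    have h := Matrix.ext_iff.mpr key i i
    rw [Matrix.diagonal_apply_eq, Matrix.mul_assoc, Matrix.mul_apply] at h
    have hentry : ∀ j, star b i j * ((diagonal (RCLike.ofReal ∘ lam) * b : Matrix (Fin n) (Fin n) ℂ)) j i
        = ((c i j * lam j : ℝ) : ℂ) := by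
      intro j
      rw [Matrix.diagonal_mul, Matrix.star_apply, Complex.star_def]
      have hswap : (starRingEnd ℂ) (b j i) * ((RCLike.ofReal ∘ lam) j * b j i)
          = ((lam j : ℂ)) * ((starRingEnd ℂ) (b j i) * b j i) := by
        simp only [Function.comp_apply, hRC]
        ring
      rw [hswap, ← Complex.normSq_eq_conj_mul_self]
      simp only [hcdef]
      push_cast
      ring
    rw [Finset.sum_congr rfl (fun j _ => hentry j)] at h
    rw [← Complex.ofReal_sum] at h
    simp only [Function.comp_apply, hRC] at h
    exact_mod_cast h
  -- weights sum ≤ 1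
  have hbb : star b * b = star V * (aᴴ * a) * V := by
    rw [hstarb, hbdef]
    have : aᴴ * (U * (star U * (a * V))) = aᴴ * (a * V) := by
      rw [← Matrix.mul_assoc U, hUU', Matrix.one_mul]
    simp only [Matrix.mul_assoc, this]
  have hpsd : (1 - star b * b).PosSemidef := by
    have h1 : Vᴴ * (1 - aᴴ * a) * V = 1 - star b * b := by
      rw [hbb, ← Matrix.star_eq_conjTranspose, Matrix.mul_sub, Matrix.sub_mul, Matrix.mul_one, hVV]
    rw [← h1]
    exact ha.conjTranspose_mul_mul_same V
  have hbbdiag : ∀ i, (star b * b) i i = ((∑ j, c i j : ℝ) : ℂ) := by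
    intro i
    rw [Matrix.mul_apply, Complex.ofReal_sum]
    refine Finset.sum_congr rfl fun j _ => ?_
    rw [Matrix.star_apply, Complex.star_def, ← Complex.normSq_eq_conj_mul_self]
  have hcsum : ∀ i, ∑ j, c i j ≤ 1 := by
    intro i
    have h0 := hpsd.dotProduct_mulVec_nonneg (Pi.single i 1)
    have e : star (Pi.single i 1 : Fin n → ℂ) ⬝ᵥ (1 - star b * b) *ᵥ Pi.single i 1
        = (1 - star b * b) i i := by
      simp [dotProduct, Matrix.mulVec, Pi.single_apply, apply_ite, mul_ite, ite_mul,
        Finset.sum_ite_eq, Finset.sum_ite_eq']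
    rw [e, Matrix.sub_apply, hbbdiag i, Matrix.one_apply_eq] at h0
    rw [show (1 : ℂ) - ((∑ j, c i j : ℝ) : ℂ) = ((1 - ∑ j, c i j : ℝ) : ℂ) by push_cast; ring]
      at h0
    have := Complex.zero_le_real.mp h0
    linarith
  -- trace computations
  have hLHS : (matFun hK f).trace = ((∑ i, f (mu i) : ℝ) : ℂ) := by
    show (hK.cfc f).trace = _
    rw [Matrix.IsHermitian.cfc, Unitary.conjStarAlgAut_apply, ← hVdef, ← hmudef, trace_mul_cycle, hVV, Matrix.one_mul,
      trace_diagonal, Complex.ofReal_sum]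
    exact Finset.sum_congr rfl fun i _ => rfl
  have hRHS : (aᴴ * matFun hx f * a).trace
      = ((∑ i, ∑ j, c i j * f (lam j) : ℝ) : ℂ) := by
    have hmf : matFun hx f = U * diagonal (RCLike.ofReal ∘ f ∘ lam) * star U := by
      show hx.cfc f = _
      rw [Matrix.IsHermitian.cfc, Unitary.conjStarAlgAut_apply, ← hUdef, ← hlamdef]
    rw [hmf]
    set D := (diagonal (RCLike.ofReal ∘ f ∘ lam) : Matrix (Fin n) (Fin n) ℂ) with hD
    have htr : (aᴴ * (U * D * star U) * a).trace = (star b * D * b).trace := by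
      have e1 : aᴴ * (U * D * star U) * a = (aᴴ * U * D) * (star U * a) := by
        simp only [Matrix.mul_assoc]
      have e2 : star b * D * b = (star V * aᴴ * U * D) * (star U * a * V) := by
        rw [hstarb, hbdef]
      calc (aᴴ * (U * D * star U) * a).trace
          = ((aᴴ * U * D) * (star U * a)).trace := by rw [e1]
        _ = ((star U * a) * (aᴴ * U * D)).trace := Matrix.trace_mul_comm _ _
        _ = ((star U * a * V) * (star V * aᴴ * U * D)).trace := by
            rw [show (star U * a) * (aᴴ * U * D)
                = star U * a * (V * star V) * (aᴴ * U * D) by rw [hVV', Matrix.mul_one]]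
            simp only [Matrix.mul_assoc]
        _ = ((star V * aᴴ * U * D) * (star U * a * V)).trace := Matrix.trace_mul_comm _ _
        _ = (star b * D * b).trace := by rw [e2]
    rw [htr, Matrix.trace, Complex.ofReal_sum]
    refine Finset.sum_congr rfl fun i _ => ?_
    rw [Complex.ofReal_sum, Matrix.diag_apply, Matrix.mul_assoc, Matrix.mul_apply]
    refine Finset.sum_congr rfl fun j _ => ?_
    rw [hD, Matrix.diagonal_mul, Matrix.star_apply, Complex.star_def]
    simp only [Function.comp_apply, hRC]
    rw [show (starRingEnd ℂ) (b j i) * ((f (lam j) : ℂ) * b j i)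
        = (f (lam j) : ℂ) * ((starRingEnd ℂ) (b j i) * b j i) from by ring,
      ← Complex.normSq_eq_conj_mul_self]
    push_cast
    ring
  rw [hLHS, hRHS, Complex.real_le_real]
  refine Finset.sum_le_sum fun i _ => ?_
  rw [hmu i]
  exact jensen_subconvex f hconv hf0 (c i) lam (hcnn i) (hcsum i)
end
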